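/- Let a_1, ..., a_p and b_1, ..., b_q be real numbers, and let j, k be integers with 1 <= j <= p and 1 <= k <= q. Let A denote the mean of the j largest a's, B the mean of the k largest b's, and C the mean of the (j+k) largest values of the combined list a_1, ..., a_p, b_1, ..., b_q. Then C >= (j*A + k*B)/(j+k) >= min(A, B). In particular, if A > B then C >= B; i.e., if the mean of the top n^+ tau positive scores exceeds the mean of the top n^- tau negative scores, the TopMean threshold is at least the TopMean-NP threshold. -/

import Mathlib

/-- The sum of the `k` largest elements of a finite multiset of reals
(counted with multiplicity). -/
noncomputable def sumTopK (s : Multiset ℝ) (k : ℕ) : ℝ :=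
  ((s.sort (· ≤ ·)).drop (Multiset.card s - k)).sum

/-- The mean of the `k` largest elements of a finite multiset of reals. -/
noncomputable def meanTopK (s : Multiset ℝ) (k : ℕ) : ℝ :=
  sumTopK s k / k

open List

lemma sublist_sum_le_drop : ∀ {l m : List ℝ}, m <+ l → l.Pairwise (· ≤ ·) →
    m.sum ≤ (l.drop (l.length - m.length)).sum := by
  intro l m h
  induction h with
  | slnil => simp
  | cons x h ih =>
    intro hl
    rename_i m' l'
    have hm : m'.length ≤ l'.length := h.length_le
    have : (x :: l').length - m'.length = (l'.length - m'.length) + 1 := by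
      simp; omega
    rw [this, List.drop_succ_cons]
    exact ih hl.of_cons
  | cons_cons x h ih =>
    intro hl
    rename_i m' l'
    have hm : m'.length ≤ l'.length := h.length_le
    have hx : ∀ y ∈ l', x ≤ y := (List.pairwise_cons.mp hl).1
    rcases Nat.eq_zero_or_eq_succ_pred (l'.length - m'.length) with h0 | he
    · have : m' = l' := h.eq_of_length (by omega)
      subst this
      simp [h0]
    · set e := (l'.length - m'.length).pred with hedef
      have hd : l'.length - m'.length = e + 1 := he
      have hlen : (x :: l').length - (x :: m').length = e + 1 := by simp; omega
      rw [hlen, List.drop_succ_cons]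
      have helt : e < l'.length := by omega
      have hdrop : l'.drop e = l'[e] :: l'.drop (e + 1) := List.drop_eq_getElem_cons helt
      rw [hdrop]
      simp only [List.sum_cons]
      have h1 : m'.sum ≤ (l'.drop (l'.length - m'.length)).sum := ih hl.of_cons
      rw [hd] at h1
      have h2 : x ≤ l'[e] := hx _ (l'.getElem_mem helt)
      linarith

lemma subperm_sum_le_drop {l m : List ℝ} (h : m <+~ l) (hl : l.Pairwise (· ≤ ·)) :
    m.sum ≤ (l.drop (l.length - m.length)).sum := by
  obtain ⟨m', hp, hs⟩ := h
  calc m.sum = m'.sum := hp.sum_eq.symm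
  _ ≤ _ := by rw [← hp.length_eq]; exact sublist_sum_le_drop hs hl

lemma le_sumTopK {s u : Multiset ℝ} (h : u ≤ s) : u.sum ≤ sumTopK s (Multiset.card u) := by
  unfold sumTopK
  have hsub : u.toList <+~ s.sort (· ≤ ·) := by
    rw [← Multiset.coe_le, Multiset.coe_toList, Multiset.sort_eq]; exact h
  have := subperm_sum_le_drop hsub (Multiset.pairwise_sort _ _)
  simpa [Multiset.length_sort, Multiset.length_toList, Multiset.sum_toList] using this

lemma sumTopK_attained (s : Multiset ℝ) (k : ℕ) (hk : k ≤ Multiset.card s) :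
    ∃ u : Multiset ℝ, u ≤ s ∧ Multiset.card u = k ∧ u.sum = sumTopK s k := by
  refine ⟨↑((s.sort (· ≤ ·)).drop (Multiset.card s - k)), ?_, ?_, ?_⟩
  · conv_rhs => rw [← Multiset.sort_eq s (· ≤ ·)]
    exact Multiset.coe_le.mpr (List.drop_sublist _ _).subperm
  · simp [Multiset.length_sort]; omega
  · simp [sumTopK]

lemma sumTopK_add_le {s t : Multiset ℝ} {j k : ℕ} (hj : j ≤ Multiset.card s)
    (hk : k ≤ Multiset.card t) :
    sumTopK s j + sumTopK t k ≤ sumTopK (s + t) (j + k) := by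
  obtain ⟨u, hu, hcu, hsu⟩ := sumTopK_attained s j hj
  obtain ⟨v, hv, hcv, hsv⟩ := sumTopK_attained t k hk
  have := le_sumTopK (add_le_add hu hv)
  simpa [hcu, hcv, hsu, hsv] using this

/-- with `A` the mean of the `j` largest `a`'s, `B` the mean of the `k` largest
`b`'s and `C` the mean of the `j+k` largest values of the combined list,
`C ≥ (jA + kB)/(j+k) ≥ min(A, B)`; in particular `A > B` implies `C ≥ B`. -/
theorem meanTopK_combined_ge {p q : ℕ} (a : Fin p → ℝ) (b : Fin q → ℝ)
    (j k : ℕ) (hj1 : 1 ≤ j) (hjp : j ≤ p) (hk1 : 1 ≤ k) (hkq : k ≤ q)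
    (A B C : ℝ)
    (hA : A = meanTopK (Multiset.map a Finset.univ.val) j)
    (hB : B = meanTopK (Multiset.map b Finset.univ.val) k)
    (hC : C = meanTopK (Multiset.map a Finset.univ.val + Multiset.map b Finset.univ.val)
      (j + k)) :
    ((j : ℝ) * A + (k : ℝ) * B) / ((j : ℝ) + (k : ℝ)) ≤ C ∧
    min A B ≤ ((j : ℝ) * A + (k : ℝ) * B) / ((j : ℝ) + (k : ℝ)) ∧
    (B < A → B ≤ C) := by
  set s := Multiset.map a Finset.univ.val with hs
  set t := Multiset.map b Finset.univ.val with ht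
  have hcs : Multiset.card s = p := by simp [hs]
  have hct : Multiset.card t = q := by simp [ht]
  have hj0 : (0:ℝ) < j := by exact_mod_cast hj1
  have hk0 : (0:ℝ) < k := by exact_mod_cast hk1
  have hjk0 : (0:ℝ) < (j:ℝ) + (k:ℝ) := by linarith
  have hkey : sumTopK s j + sumTopK t k ≤ sumTopK (s + t) (j + k) :=
    sumTopK_add_le (hcs ▸ hjp) (hct ▸ hkq)
  have hAj : (j:ℝ) * A = sumTopK s j := by
    rw [hA, meanTopK]; field_simp
  have hBk : (k:ℝ) * B = sumTopK t k := by
    rw [hB, meanTopK]; field_simp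
  have hCjk : C = sumTopK (s + t) (j + k) / ((j:ℝ) + (k:ℝ)) := by
    rw [hC, meanTopK]; push_cast; ring_nf
  have h1 : ((j : ℝ) * A + (k : ℝ) * B) / ((j : ℝ) + (k : ℝ)) ≤ C := by
    rw [hCjk, hAj, hBk]
    exact div_le_div_of_nonneg_right hkey hjk0.le |>.trans_eq rfl
  have h2 : min A B ≤ ((j : ℝ) * A + (k : ℝ) * B) / ((j : ℝ) + (k : ℝ)) := by
    rw [le_div_iff₀ hjk0]
    have h3 : min A B ≤ A := min_le_left _ _
    have h4 : min A B ≤ B := min_le_right _ _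
    nlinarith
  refine ⟨h1, h2, fun hBA => ?_⟩
  have : min A B = B := min_eq_right hBA.le
  linarith [this ▸ h2, h1]
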